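/- For all 1 ≤ k < j < i ≤ n, the following elements of F lie in the S-submodule span_S(B): x_{kl} x_{kp}·r_{ijk} for all 1 ≤ p ≤ l ≤ k−1, and x_{jq} x_{kp}·r_{ijk} for all 1 ≤ q ≤ k and 1 ≤ p ≤ k−1. -/
import Mathlib


/-- Index set for the variables `x_{ij}` (`1 ≤ j < i ≤ n`, `0`-indexed). -/
abbrev PIdx (n : ℕ) := { p : Fin n × Fin n // p.2 < p.1 }

/-- The polynomial ring `S = ℂ[x_{ij} : j < i]`. -/
abbrev Sn (n : ℕ) := MvPolynomial (PIdx n) ℂ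

/-- Index set for the basis `r_{ijk}` (`k < j < i`). -/
abbrev TIdx (n : ℕ) := { t : Fin n × Fin n × Fin n // t.2.2 < t.2.1 ∧ t.2.1 < t.1 }

/-- The free `S`-module `F` with basis `{r_{ijk} : k < j < i}`. -/
abbrev Fn (n : ℕ) := TIdx n → Sn n

/-- The variable `x_{ij}` (for `j < i`). -/
noncomputable def Xv (n : ℕ) (i j : Fin n) (h : j < i) : Sn n := MvPolynomial.X ⟨(i, j), h⟩

/-- The basis element `r_{ijk}` of `F` (for `k < j < i`). -/
noncomputable def rGen (n : ℕ) (i j k : Fin n) (h1 : k < j) (h2 : j < i) : Fn n :=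
  Pi.single ⟨(i, j, k), h1, h2⟩ 1

/-- The generating set `B = ∪ B_{ijk}` of relations (`g₁,…,g₄, h₁,…,h₈` of the paper):
for each `k < j < i` and admissible `l₁ < k < l₂ < j < l₃ < i < l₄` and pairs `t < s`
with `{s,t} ∩ {i,j,k} = ∅`. -/
noncomputable def BSet (n : ℕ) : Set (Fn n) :=
  { w | ∃ (i j k : Fin n) (hkj : k < j) (hji : j < i),
    -- g₁
    (∃ (l : Fin n) (h1 : k < l) (h2 : l < j),
      w = (-Xv n j k hkj - Xv n l k h1) • rGen n i j l h2 hji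
          + Xv n j l h2 • rGen n i j k hkj hji) ∨
    -- g₂
    (∃ (l : Fin n) (_h1 : k < l) (h2 : l < j),
      w = Xv n j k hkj • rGen n i j l h2 hji
          + Xv n i l (h2.trans hji) • rGen n i j k hkj hji) ∨
    -- g₃
    (∃ (l : Fin n) (h1 : j < l) (h2 : l < i),
      w = -(Xv n j k hkj • rGen n i l j h1 h2)
          + Xv n i l h2 • rGen n i j k hkj hji) ∨
    -- g₄
    (∃ (l : Fin n) (h1 : i < l),
      w = Xv n j k hkj • rGen n l i j hji h1
          + Xv n l i h1 • rGen n i j k hkj hji) ∨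
    -- h₁
    (∃ (l : Fin n) (h1 : l < k),
      w = (Xv n i l (h1.trans (hkj.trans hji)) + Xv n j l (h1.trans hkj) + Xv n k l h1) •
          rGen n i j k hkj hji) ∨
    -- h₂
    (w = (Xv n i k (hkj.trans hji) + Xv n j k hkj) • rGen n i j k hkj hji) ∨
    -- h₃
    (∃ (l : Fin n) (h1 : k < l) (_h2 : l < j), w = Xv n l k h1 • rGen n i j k hkj hji) ∨
    -- h₄
    (∃ (l : Fin n) (h1 : j < l) (_h2 : l < i),
      w = Xv n l k (hkj.trans h1) • rGen n i j k hkj hji) ∨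
    -- h₅
    (∃ (l : Fin n) (h1 : j < l) (_h2 : l < i), w = Xv n l j h1 • rGen n i j k hkj hji) ∨
    -- h₆
    (∃ (l : Fin n) (h1 : i < l),
      w = Xv n l k ((hkj.trans hji).trans h1) • rGen n i j k hkj hji) ∨
    -- h₇
    (∃ (l : Fin n) (h1 : i < l), w = Xv n l j (hji.trans h1) • rGen n i j k hkj hji) ∨
    -- h₈
    (∃ (s t : Fin n) (h : t < s), s ≠ i ∧ s ≠ j ∧ s ≠ k ∧ t ≠ i ∧ t ≠ j ∧ t ≠ k ∧
      w = Xv n s t h • rGen n i j k hkj hji) }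

/-- The `S`-submodule of `F` spanned by `B`. -/
noncomputable def spanB (n : ℕ) : Submodule (Sn n) (Fn n) := Submodule.span (Sn n) (BSet n)

/-- The infinitesimal Alexander invariant `𝔅ₙ = F / span_S(B)` of `PΣₙ⁺`. -/
abbrev Bn (n : ℕ) := Fn n ⧸ spanB n


section auxlemmas
variable {n : ℕ}

lemma mem_g2 (a b c : Fin n) (hcb : c < b) (hba : b < a) (l : Fin n) (h1 : c < l) (h2 : l < b) :
    Xv n b c hcb • rGen n a b l h2 hba + Xv n a l (h2.trans hba) • rGen n a b c hcb hba
      ∈ spanB n :=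
  Submodule.subset_span ⟨a, b, c, hcb, hba, Or.inr (Or.inl ⟨l, h1, h2, rfl⟩)⟩

lemma mem_g4 (a b c : Fin n) (hcb : c < b) (hba : b < a) (l : Fin n) (h1 : a < l) :
    Xv n b c hcb • rGen n l a b hba h1 + Xv n l a h1 • rGen n a b c hcb hba ∈ spanB n :=
  Submodule.subset_span ⟨a, b, c, hcb, hba,
    Or.inr (Or.inr (Or.inr (Or.inl ⟨l, h1, rfl⟩)))⟩

lemma mem_h1 (a b c : Fin n) (hcb : c < b) (hba : b < a) (l : Fin n) (h1 : l < c) :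
    (Xv n a l (h1.trans (hcb.trans hba)) + Xv n b l (h1.trans hcb) + Xv n c l h1) •
      rGen n a b c hcb hba ∈ spanB n :=
  Submodule.subset_span ⟨a, b, c, hcb, hba,
    Or.inr (Or.inr (Or.inr (Or.inr (Or.inl ⟨l, h1, rfl⟩))))⟩

lemma mem_h2 (a b c : Fin n) (hcb : c < b) (hba : b < a) :
    (Xv n a c (hcb.trans hba) + Xv n b c hcb) • rGen n a b c hcb hba ∈ spanB n :=
  Submodule.subset_span ⟨a, b, c, hcb, hba,
    Or.inr (Or.inr (Or.inr (Or.inr (Or.inr (Or.inl rfl)))))⟩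

lemma mem_h3 (a b c : Fin n) (hcb : c < b) (hba : b < a) (l : Fin n) (h1 : c < l) (h2 : l < b) :
    Xv n l c h1 • rGen n a b c hcb hba ∈ spanB n :=
  Submodule.subset_span ⟨a, b, c, hcb, hba,
    Or.inr (Or.inr (Or.inr (Or.inr (Or.inr (Or.inr (Or.inl ⟨l, h1, h2, rfl⟩))))))⟩

lemma mem_h6 (a b c : Fin n) (hcb : c < b) (hba : b < a) (l : Fin n) (h1 : a < l) :
    Xv n l c ((hcb.trans hba).trans h1) • rGen n a b c hcb hba ∈ spanB n :=
  Submodule.subset_span ⟨a, b, c, hcb, hba,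
    Or.inr (Or.inr (Or.inr (Or.inr (Or.inr (Or.inr (Or.inr (Or.inr (Or.inr
      (Or.inl ⟨l, h1, rfl⟩)))))))))⟩

lemma mem_h7 (a b c : Fin n) (hcb : c < b) (hba : b < a) (l : Fin n) (h1 : a < l) :
    Xv n l b (hba.trans h1) • rGen n a b c hcb hba ∈ spanB n :=
  Submodule.subset_span ⟨a, b, c, hcb, hba,
    Or.inr (Or.inr (Or.inr (Or.inr (Or.inr (Or.inr (Or.inr (Or.inr (Or.inr (Or.inr
      (Or.inl ⟨l, h1, rfl⟩))))))))))⟩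

lemma mem_h8 (a b c : Fin n) (hcb : c < b) (hba : b < a) (s t : Fin n) (h : t < s)
    (h1 : s ≠ a) (h2 : s ≠ b) (h3 : s ≠ c) (h4 : t ≠ a) (h5 : t ≠ b) (h6 : t ≠ c) :
    Xv n s t h • rGen n a b c hcb hba ∈ spanB n :=
  Submodule.subset_span ⟨a, b, c, hcb, hba,
    Or.inr (Or.inr (Or.inr (Or.inr (Or.inr (Or.inr (Or.inr (Or.inr (Or.inr (Or.inr (Or.inr
      ⟨s, t, h, h1, h2, h3, h4, h5, h6, rfl⟩))))))))))⟩

/-- `x_{kp}·r_{ijq} ∈ span B` when `q < k < j < i` and `p < k`. -/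
lemma aux_kp (i j k q p : Fin n) (hqk : q < k) (hkj : k < j) (hji : j < i) (hp : p < k)
    (hqj : q < j) :
    Xv n k p hp • rGen n i j q hqj hji ∈ spanB n := by
  rcases eq_or_ne p q with rfl | hpq
  · exact mem_h3 i j p hqj hji k hqk hkj
  · exact mem_h8 i j q hqj hji k p hp
      (ne_of_lt (hkj.trans hji)) (ne_of_lt hkj) (ne_of_gt hqk)
      (ne_of_lt ((hp.trans hkj).trans hji)) (ne_of_lt (hp.trans hkj)) hpq

/-- Part 2 of the theorem: `x_{jq} x_{kp} · r_{ijk} ∈ span B`. -/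
lemma aux2 (i j k : Fin n) (hkj : k < j) (hji : j < i)
    (q p : Fin n) (hq : q ≤ k) (hp : p < k) :
    (Xv n j q (lt_of_le_of_lt hq hkj) * Xv n k p hp) • rGen n i j k hkj hji ∈ spanB n := by
  rcases eq_or_lt_of_le hq with rfl | hqk
  · -- q = k (Lean substitutes `k := q`)
    have h2 : (Xv n i q (hkj.trans hji) + Xv n j q (lt_of_le_of_lt hq hkj)) •
        rGen n i j q hkj hji ∈ spanB n := mem_h2 i j q hkj hji
    have g4 : Xv n q p hp • rGen n i j q hkj hji
        + Xv n i j hji • rGen n j q p hp hkj ∈ spanB n := mem_g4 j q p hp hkj i hji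
    have h7 : Xv n i q (hkj.trans hji) • rGen n j q p hp hkj ∈ spanB n :=
      mem_h7 j q p hp hkj i hji
    have key : (Xv n j q (lt_of_le_of_lt hq hkj) * Xv n q p hp) • rGen n i j q hkj hji
        = Xv n q p hp •
            ((Xv n i q (hkj.trans hji) + Xv n j q (lt_of_le_of_lt hq hkj)) •
              rGen n i j q hkj hji)
          - Xv n i q (hkj.trans hji) •
            (Xv n q p hp • rGen n i j q hkj hji + Xv n i j hji • rGen n j q p hp hkj)
          + Xv n i j hji • (Xv n i q (hkj.trans hji) • rGen n j q p hp hkj) := by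
      module
    rw [key]
    exact Submodule.add_mem _
      (Submodule.sub_mem _ (Submodule.smul_mem _ _ h2) (Submodule.smul_mem _ _ g4))
      (Submodule.smul_mem _ _ h7)
  · -- q < k
    have g2 : Xv n j q (lt_of_le_of_lt hq hkj) • rGen n i j k hkj hji
        + Xv n i k (hkj.trans hji) • rGen n i j q (lt_of_le_of_lt hq hkj) hji ∈ spanB n :=
      mem_g2 i j q (hqk.trans hkj) hji k hqk hkj
    have e' : Xv n k p hp • rGen n i j q (lt_of_le_of_lt hq hkj) hji ∈ spanB n :=
      aux_kp i j k q p hqk hkj hji hp (lt_of_le_of_lt hq hkj)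
    have key : (Xv n j q (lt_of_le_of_lt hq hkj) * Xv n k p hp) • rGen n i j k hkj hji
        = Xv n k p hp •
            (Xv n j q (lt_of_le_of_lt hq hkj) • rGen n i j k hkj hji
              + Xv n i k (hkj.trans hji) • rGen n i j q (lt_of_le_of_lt hq hkj) hji)
          - Xv n i k (hkj.trans hji) •
            (Xv n k p hp • rGen n i j q (lt_of_le_of_lt hq hkj) hji) := by
      module
    rw [key]
    exact Submodule.sub_mem _ (Submodule.smul_mem _ _ g2) (Submodule.smul_mem _ _ e')

/-- Part 1 of the theorem: `x_{kl} x_{kp} · r_{ijk} ∈ span B`. -/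
lemma aux1 (i j k : Fin n) (hkj : k < j) (hji : j < i)
    (l p : Fin n) (hpl : p ≤ l) (hlk : l < k) :
    (Xv n k l hlk * Xv n k p (lt_of_le_of_lt hpl hlk)) • rGen n i j k hkj hji ∈ spanB n := by
  set hp := lt_of_le_of_lt hpl hlk with hpdef
  have h1 : (Xv n i l (hlk.trans (hkj.trans hji)) + Xv n j l (hlk.trans hkj)
        + Xv n k l hlk) • rGen n i j k hkj hji ∈ spanB n := mem_h1 i j k hkj hji l hlk
  have g4 : Xv n k p hp • rGen n i j k hkj hji
      + Xv n i j hji • rGen n j k p hp hkj ∈ spanB n := mem_g4 j k p hp hkj i hji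
  have e'' : Xv n i l (hlk.trans (hkj.trans hji)) • rGen n j k p hp hkj ∈ spanB n := by
    rcases eq_or_lt_of_le hpl with rfl | hpl'
    · exact mem_h6 j k p hp hkj i hji
    · exact mem_h8 j k p hp hkj i l (hlk.trans (hkj.trans hji))
        (ne_of_gt hji) (ne_of_gt (hkj.trans hji)) (ne_of_gt (hp.trans (hkj.trans hji)))
        (ne_of_lt (hlk.trans hkj)) (ne_of_lt hlk) (ne_of_gt hpl')
  have mem2 : (Xv n j l (lt_of_le_of_lt (le_of_lt hlk) hkj) * Xv n k p hp) •
      rGen n i j k hkj hji ∈ spanB n := aux2 i j k hkj hji l p (le_of_lt hlk) hp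
  have key : (Xv n k l hlk * Xv n k p hp) • rGen n i j k hkj hji
      = Xv n k p hp •
          ((Xv n i l (hlk.trans (hkj.trans hji)) + Xv n j l (hlk.trans hkj)
            + Xv n k l hlk) • rGen n i j k hkj hji)
        - Xv n i l (hlk.trans (hkj.trans hji)) •
          (Xv n k p hp • rGen n i j k hkj hji + Xv n i j hji • rGen n j k p hp hkj)
        + Xv n i j hji •
          (Xv n i l (hlk.trans (hkj.trans hji)) • rGen n j k p hp hkj)
        - (Xv n j l (lt_of_le_of_lt (le_of_lt hlk) hkj) * Xv n k p hp) •
          rGen n i j k hkj hji := by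
    module
  rw [key]
  exact Submodule.sub_mem _
    (Submodule.add_mem _
      (Submodule.sub_mem _ (Submodule.smul_mem _ _ h1) (Submodule.smul_mem _ _ g4))
      (Submodule.smul_mem _ _ e''))
    mem2

end auxlemmas

/-- For all `k < j < i`, the elements `x_{kl} x_{kp}·r_{ijk}` (for `p ≤ l < k`) and
`x_{jq} x_{kp}·r_{ijk}` (for `q ≤ k`, `p < k`; all indices `0`-indexed) lie in the
`S`-submodule `span_S(B)`. -/

theorem quadratic_elements_mem_spanB (n : ℕ) (hn : 3 ≤ n)
    (i j k : Fin n) (hkj : k < j) (hji : j < i) :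
    (∀ (l p : Fin n) (hpl : p ≤ l) (hlk : l < k),
      (Xv n k l hlk * Xv n k p (lt_of_le_of_lt hpl hlk)) • rGen n i j k hkj hji ∈ spanB n) ∧
    (∀ (q p : Fin n) (hq : q ≤ k) (hp : p < k),
      (Xv n j q (lt_of_le_of_lt hq hkj) * Xv n k p hp) • rGen n i j k hkj hji ∈ spanB n) :=
  ⟨fun l p hpl hlk => aux1 i j k hkj hji l p hpl hlk,
   fun q p hq hp => aux2 i j k hkj hji q p hq hp⟩
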